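/- (Trust Region Update Performance.) Let π_k and π_{k+1} be policies with π_k(a|s) > 0 for all s, a. Suppose E_{s∼d^{π_k}, a∼π_{k+1}(·|s)}[A^{π_k}(s,a)] ≥ 0 and E_{s∼d^{π_k}}[D_KL(π_{k+1}‖π_k)[s]] ≤ δ for some δ > 0. Then J(π_{k+1}) - J(π_k) ≥ -√(2δ) γ ε^{π_{k+1}} / (1-γ)², where ε^{π_{k+1}} = max_s |E_{a∼π_{k+1}(·|s)}[A^{π_k}(s,a)]|. -/

import Mathlib

open BigOperators Finset Matrix

noncomputable section

variable {S A : Type*}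

/-- Policy transition matrix (column-stochastic): entry `(s', s)` is
`P_pol(s'|s) = ∑ a, P(s'|s,a) pol(a|s)`. -/
def Pmat [Fintype A] (P : S → A → S → ℝ) (pol : S → A → ℝ) : Matrix S S ℝ :=
  fun s' s => ∑ a, P s a s' * pol s a

/-- Discounted future state distribution `d^π = (1-γ) ∑_t γ^t P_π^t μ`. -/
def dFut [Fintype S] [DecidableEq S] [Fintype A] (γ : ℝ) (P : S → A → S → ℝ)
    (μ : S → ℝ) (pol : S → A → ℝ) : S → ℝ :=
  fun s => (1 - γ) * ∑' t : ℕ, γ ^ t * ((Pmat P pol ^ t) *ᵥ μ) s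

/-- Discounted return `J(π)` (also used as the cost return `J_C(π)` with a cost `C`
in place of the reward `R`). -/
def Jret [Fintype S] [DecidableEq S] [Fintype A] (γ : ℝ) (P : S → A → S → ℝ)
    (R : S → A → S → ℝ) (μ : S → ℝ) (pol : S → A → ℝ) : ℝ :=
  (1 / (1 - γ)) * ∑ s, dFut γ P μ pol s * (∑ a, pol s a * (∑ s', P s a s' * R s a s'))

/-- Total variational divergence between action distributions at state `s`. -/
def DTV [Fintype A] (pol' pol : S → A → ℝ) (s : S) : ℝ :=
  (1 / 2) * ∑ a, |pol' s a - pol s a|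

/-- Kullback–Leibler divergence between action distributions at state `s`. -/
def DKL [Fintype A] (pol' pol : S → A → ℝ) (s : S) : ℝ :=
  ∑ a, pol' s a * Real.log (pol' s a / pol s a)

/-- Advantage function `A^π(s,a) = Q^π(s,a) - V^π(s)` built from a value function `V`
(also used for cost advantages with a cost `C` in place of `R`). -/
def Adv [Fintype S] (γ : ℝ) (P : S → A → S → ℝ) (R : S → A → S → ℝ)
    (V : S → ℝ) (s : S) (a : A) : ℝ :=
  (∑ s', P s a s' * (R s a s' + γ * V s')) - V s

/-- `ε_f^{π'} = max_s |E_{a∼π'(·|s), s'∼P}[δ_f(s,a,s')]|` where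
`δ_f(s,a,s') = R(s,a,s') + γ f(s') - f(s)`. -/
def epsF [Fintype S] [Fintype A] (γ : ℝ) (P : S → A → S → ℝ) (R : S → A → S → ℝ)
    (f : S → ℝ) (pol' : S → A → ℝ) : ℝ :=
  ⨆ s, |∑ a, pol' s a * (∑ s', P s a s' * (R s a s' + γ * f s' - f s))|

/-- Surrogate `L_{π,f}(π') = E_{s∼d^π, a∼π, s'∼P}[(π'(a|s)/π(a|s) - 1) δ_f(s,a,s')]`. -/
def Lsurr [Fintype S] [DecidableEq S] [Fintype A] (γ : ℝ) (P : S → A → S → ℝ)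
    (R : S → A → S → ℝ) (μ : S → ℝ) (f : S → ℝ) (pol pol' : S → A → ℝ) : ℝ :=
  ∑ s, dFut γ P μ pol s * (∑ a, pol s a * (∑ s', P s a s' *
    ((pol' s a / pol s a - 1) * (R s a s' + γ * f s' - f s))))



/-! ### Auxiliary scalar lemmas (for Pinsker's inequality) -/

def Gfun (x : ℝ) : ℝ := (x + 1) * Real.log x - 2 * x + 2
def Ffun (x : ℝ) : ℝ := 2 * (x + 2) * (x * Real.log x - x + 1) - 3 * (x - 1) ^ 2

lemma Gfun_deriv {t : ℝ} (ht : 0 < t) :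
    HasDerivAt Gfun (Real.log t + 1 / t - 1) t := by
  have h1 : HasDerivAt (fun x : ℝ => (x + 1) * Real.log x)
      (1 * Real.log t + (t + 1) * t⁻¹) t :=
    ((hasDerivAt_id t).add_const 1).mul (Real.hasDerivAt_log ht.ne')
  have h2 := (h1.sub ((hasDerivAt_id t).const_mul 2)).add_const 2
  refine HasDerivAt.congr_deriv (f := Gfun) h2 ?_
  field_simp
  ring

lemma Gfun_mono : MonotoneOn Gfun (Set.Ioi (0:ℝ)) := by
  apply monotoneOn_of_deriv_nonneg (convex_Ioi 0)
  · intro x hx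
    exact (Gfun_deriv hx).continuousAt.continuousWithinAt
  · intro x hx
    rw [interior_Ioi] at hx
    exact (Gfun_deriv hx).differentiableAt.differentiableWithinAt
  · intro x hx
    rw [interior_Ioi] at hx
    rw [(Gfun_deriv hx).deriv]
    have := Real.one_sub_inv_le_log_of_pos hx
    rw [one_div]
    linarith

lemma Gfun_one : Gfun 1 = 0 := by simp [Gfun]

lemma Ffun_deriv {t : ℝ} (ht : 0 < t) : HasDerivAt Ffun (4 * Gfun t) t := by
  have hinner : HasDerivAt (fun x : ℝ => x * Real.log x - x + 1)
      (1 * Real.log t + t * t⁻¹ - 1) t :=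
    (((hasDerivAt_id t).mul (Real.hasDerivAt_log ht.ne')).sub (hasDerivAt_id t)).add_const 1
  have hleft : HasDerivAt (fun x : ℝ => 2 * (x + 2)) 2 t := by
    simpa using ((hasDerivAt_id t).add_const 2).const_mul 2
  have hprod := hleft.mul hinner
  have hsq : HasDerivAt (fun x : ℝ => 3 * (x - 1) ^ 2)
      (3 * ((2 : ℕ) * (t - 1) ^ 1 * 1)) t :=
    (((hasDerivAt_id t).sub_const 1).pow 2).const_mul 3
  have h := hprod.sub hsq
  refine HasDerivAt.congr_deriv (f := Ffun) h ?_
  have htt : t * t⁻¹ = 1 := mul_inv_cancel₀ ht.ne'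
  simp only [Gfun, htt]
  push_cast
  ring

lemma Ffun_one : Ffun 1 = 0 := by simp [Ffun]

lemma Ffun_nonneg {t : ℝ} (ht : 0 ≤ t) : 0 ≤ Ffun t := by
  rcases eq_or_lt_of_le ht with h | h
  · simp [Ffun, ← h]
    norm_num
  rcases le_total t 1 with h1 | h1
  · have hanti : AntitoneOn Ffun (Set.Ioc (0:ℝ) 1) := by
      apply antitoneOn_of_deriv_nonpos (convex_Ioc 0 1)
      · intro x hx
        exact (Ffun_deriv hx.1).continuousAt.continuousWithinAt
      · intro x hx
        rw [interior_Ioc] at hx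
        exact (Ffun_deriv hx.1).differentiableAt.differentiableWithinAt
      · intro x hx
        rw [interior_Ioc] at hx
        rw [(Ffun_deriv hx.1).deriv]
        have := Gfun_mono (Set.mem_Ioi.2 hx.1) (Set.mem_Ioi.2 one_pos) hx.2.le
        rw [Gfun_one] at this
        linarith
    have := hanti (Set.mem_Ioc.2 ⟨h, h1⟩) (Set.mem_Ioc.2 ⟨one_pos, le_refl 1⟩) h1
    rw [Ffun_one] at this
    exact this
  · have hmono : MonotoneOn Ffun (Set.Ici (1:ℝ)) := by
      apply monotoneOn_of_deriv_nonneg (convex_Ici 1)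
      · intro x hx
        exact (Ffun_deriv (lt_of_lt_of_le one_pos hx)).continuousAt.continuousWithinAt
      · intro x hx
        rw [interior_Ici] at hx
        exact (Ffun_deriv (lt_trans one_pos hx)).differentiableAt.differentiableWithinAt
      · intro x hx
        rw [interior_Ici] at hx
        rw [(Ffun_deriv (lt_trans one_pos hx)).deriv]
        have := Gfun_mono (Set.mem_Ioi.2 one_pos) (Set.mem_Ioi.2 (lt_trans one_pos hx)) hx.le
        rw [Gfun_one] at this
        linarith
    have := hmono (Set.mem_Ici.2 (le_refl 1)) (Set.mem_Ici.2 h1) h1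
    rw [Ffun_one] at this
    exact this

lemma key_scalar {p q : ℝ} (hp : 0 ≤ p) (hq : 0 < q) :
    3 * (p - q) ^ 2 ≤ 2 * (p + 2 * q) * (p * Real.log (p / q) - p + q) := by
  have h := Ffun_nonneg (div_nonneg hp hq.le)
  have h2 : 0 ≤ q ^ 2 * Ffun (p / q) := mul_nonneg (sq_nonneg q) h
  have key : q ^ 2 * Ffun (p / q)
      = 2 * (p + 2 * q) * (p * Real.log (p / q) - p + q) - 3 * (p - q) ^ 2 := by
    unfold Ffun
    field_simp
  linarith

/-- Discrete Pinsker-type inequality. -/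
lemma pinsker_sum {A : Type*} [Fintype A] (p q : A → ℝ)
    (hp0 : ∀ a, 0 ≤ p a) (hq0 : ∀ a, 0 < q a)
    (hp1 : ∑ a, p a = 1) (hq1 : ∑ a, q a = 1) :
    (∑ a, |p a - q a|) ^ 2 ≤ 2 * ∑ a, p a * Real.log (p a / q a) := by
  set w : A → ℝ := fun a => 2 * (p a + 2 * q a) / 3 with hw
  have hw0 : ∀ a, 0 < w a := fun a => by
    have h1 := hp0 a; have h2 := hq0 a
    have : w a = 2 * (p a + 2 * q a) / 3 := rfl
    rw [this]
    apply div_pos (by linarith) (by norm_num)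
  have cs := Finset.sum_sq_le_sum_mul_sum_of_sq_eq_mul Finset.univ
      (r := fun a => |p a - q a|) (f := w) (g := fun a => (p a - q a) ^ 2 / w a)
      (fun a _ => (hw0 a).le) (fun a _ => div_nonneg (sq_nonneg _) (hw0 a).le)
      (fun a _ => by rw [sq_abs, mul_comm, div_mul_cancel₀ _ (hw0 a).ne'])
  have hsw : ∑ a, w a = 2 := by
    have h : ∀ a ∈ Finset.univ (α := A), w a = 2/3 * p a + 4/3 * q a := by
      intro a _
      have : w a = 2 * (p a + 2 * q a) / 3 := rfl
      rw [this]; ring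
    rw [Finset.sum_congr rfl h, Finset.sum_add_distrib, ← Finset.mul_sum, ← Finset.mul_sum,
      hp1, hq1]
    norm_num
  have hterm : ∀ a, (p a - q a) ^ 2 / w a ≤ p a * Real.log (p a / q a) - p a + q a := by
    intro a
    rw [div_le_iff₀ (hw0 a), hw]
    nlinarith [key_scalar (hp0 a) (hq0 a)]
  have hsum2 : ∑ a, (p a - q a) ^ 2 / w a
      ≤ ∑ a, (p a * Real.log (p a / q a) - p a + q a) :=
    Finset.sum_le_sum fun a _ => hterm a
  have hsplit : ∑ a, (p a * Real.log (p a / q a) - p a + q a)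
      = ∑ a, p a * Real.log (p a / q a) := by
    rw [Finset.sum_add_distrib, Finset.sum_sub_distrib, hp1, hq1]
    ring
  calc (∑ a, |p a - q a|) ^ 2 ≤ (∑ a, w a) * ∑ a, (p a - q a) ^ 2 / w a := cs
    _ = 2 * ∑ a, (p a - q a) ^ 2 / w a := by rw [hsw]
    _ ≤ 2 * ∑ a, p a * Real.log (p a / q a) := by
        rw [hsplit] at hsum2; linarith

/-! ### Auxiliary facts about `Pmat` and `dFut` -/

section MDPAux
variable [Fintype S] [DecidableEq S] [Fintype A]
variable {γ : ℝ} {P : S → A → S → ℝ} {μ : S → ℝ} {pol : S → A → ℝ}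

set_option linter.unusedSectionVars false

lemma Pmat_nonneg (hP0 : ∀ s a s', 0 ≤ P s a s') (hpol0 : ∀ s a, 0 ≤ pol s a) (s' s : S) :
    0 ≤ Pmat P pol s' s :=
  Finset.sum_nonneg fun a _ => mul_nonneg (hP0 s a s') (hpol0 s a)

lemma Pmat_col (hP1 : ∀ s a, (∑ s', P s a s') = 1) (hpol1 : ∀ s, (∑ a, pol s a) = 1) (s : S) :
    ∑ s', Pmat P pol s' s = 1 := by
  unfold Pmat
  rw [Finset.sum_comm]
  have h : ∀ a ∈ Finset.univ (α := A), (∑ s', P s a s' * pol s a) = pol s a := by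
    intro a _
    rw [← Finset.sum_mul, hP1, one_mul]
  rw [Finset.sum_congr rfl h, hpol1]

lemma iter_succ (t : ℕ) (s' : S) :
    ((Pmat P pol ^ (t + 1)) *ᵥ μ) s' = ∑ s, Pmat P pol s' s * ((Pmat P pol ^ t) *ᵥ μ) s := by
  rw [pow_succ']
  rw [← Matrix.mulVec_mulVec]
  simp [Matrix.mulVec, dotProduct]

lemma iter_nonneg (hP0 : ∀ s a s', 0 ≤ P s a s') (hpol0 : ∀ s a, 0 ≤ pol s a)
    (hμ0 : ∀ s, 0 ≤ μ s) (t : ℕ) (s : S) : 0 ≤ ((Pmat P pol ^ t) *ᵥ μ) s := by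
  induction t generalizing s with
  | zero => simpa [Matrix.one_mulVec] using hμ0 s
  | succ t ih =>
    rw [iter_succ]
    exact Finset.sum_nonneg fun s'' _ => mul_nonneg (Pmat_nonneg hP0 hpol0 s s'') (ih s'')

lemma iter_sum (hP1 : ∀ s a, (∑ s', P s a s') = 1) (hpol1 : ∀ s, (∑ a, pol s a) = 1)
    (hμ1 : (∑ s, μ s) = 1) (t : ℕ) : ∑ s, ((Pmat P pol ^ t) *ᵥ μ) s = 1 := by
  induction t with
  | zero => simpa [Matrix.one_mulVec] using hμ1
  | succ t ih =>
    have h : ∀ s' ∈ Finset.univ (α := S), ((Pmat P pol ^ (t + 1)) *ᵥ μ) s'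
        = ∑ s, Pmat P pol s' s * ((Pmat P pol ^ t) *ᵥ μ) s := fun s' _ => iter_succ t s'
    rw [Finset.sum_congr rfl h, Finset.sum_comm]
    have h2 : ∀ s ∈ Finset.univ (α := S), (∑ s', Pmat P pol s' s * ((Pmat P pol ^ t) *ᵥ μ) s)
        = ((Pmat P pol ^ t) *ᵥ μ) s := by
      intro s _
      rw [← Finset.sum_mul, Pmat_col hP1 hpol1, one_mul]
    rw [Finset.sum_congr rfl h2, ih]

lemma iter_le_one (hP0 : ∀ s a s', 0 ≤ P s a s') (hpol0 : ∀ s a, 0 ≤ pol s a)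
    (hP1 : ∀ s a, (∑ s', P s a s') = 1) (hpol1 : ∀ s, (∑ a, pol s a) = 1)
    (hμ0 : ∀ s, 0 ≤ μ s) (hμ1 : (∑ s, μ s) = 1) (t : ℕ) (s : S) :
    ((Pmat P pol ^ t) *ᵥ μ) s ≤ 1 := by
  have := Finset.single_le_sum (f := fun s => ((Pmat P pol ^ t) *ᵥ μ) s)
    (fun s'' _ => iter_nonneg hP0 hpol0 hμ0 t s'') (Finset.mem_univ s)
  rw [iter_sum hP1 hpol1 hμ1 t] at this
  exact this

lemma summable_aux (hγ0 : 0 ≤ γ) (hγ1 : γ < 1) (hP0 : ∀ s a s', 0 ≤ P s a s')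
    (hpol0 : ∀ s a, 0 ≤ pol s a) (hP1 : ∀ s a, (∑ s', P s a s') = 1)
    (hpol1 : ∀ s, (∑ a, pol s a) = 1) (hμ0 : ∀ s, 0 ≤ μ s) (hμ1 : (∑ s, μ s) = 1) (s : S) :
    Summable (fun t : ℕ => γ ^ t * ((Pmat P pol ^ t) *ᵥ μ) s) := by
  apply Summable.of_nonneg_of_le
    (fun t => mul_nonneg (pow_nonneg hγ0 t) (iter_nonneg hP0 hpol0 hμ0 t s))
    (fun t => mul_le_of_le_one_right (pow_nonneg hγ0 t)
      (iter_le_one hP0 hpol0 hP1 hpol1 hμ0 hμ1 t s))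
    (summable_geometric_of_lt_one hγ0 hγ1)

lemma dFut_nonneg (hγ0 : 0 ≤ γ) (hγ1 : γ < 1) (hP0 : ∀ s a s', 0 ≤ P s a s')
    (hpol0 : ∀ s a, 0 ≤ pol s a) (hμ0 : ∀ s, 0 ≤ μ s) (s : S) :
    0 ≤ dFut γ P μ pol s :=
  mul_nonneg (by linarith)
    (tsum_nonneg fun t => mul_nonneg (pow_nonneg hγ0 t) (iter_nonneg hP0 hpol0 hμ0 t s))

lemma dFut_sum (hγ0 : 0 ≤ γ) (hγ1 : γ < 1) (hP0 : ∀ s a s', 0 ≤ P s a s')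
    (hpol0 : ∀ s a, 0 ≤ pol s a) (hP1 : ∀ s a, (∑ s', P s a s') = 1)
    (hpol1 : ∀ s, (∑ a, pol s a) = 1) (hμ0 : ∀ s, 0 ≤ μ s) (hμ1 : (∑ s, μ s) = 1) :
    ∑ s, dFut γ P μ pol s = 1 := by
  unfold dFut
  rw [← Finset.mul_sum,
    ← Summable.tsum_finsetSum (fun s _ => summable_aux hγ0 hγ1 hP0 hpol0 hP1 hpol1 hμ0 hμ1 s)]
  have h : ∀ t : ℕ, (∑ s, γ ^ t * ((Pmat P pol ^ t) *ᵥ μ) s) = γ ^ t := by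
    intro t
    rw [← Finset.mul_sum, iter_sum hP1 hpol1 hμ1, mul_one]
  rw [tsum_congr h, tsum_geometric_of_lt_one hγ0 hγ1]
  exact mul_inv_cancel₀ (by linarith)

lemma dFut_rec (hγ0 : 0 ≤ γ) (hγ1 : γ < 1) (hP0 : ∀ s a s', 0 ≤ P s a s')
    (hpol0 : ∀ s a, 0 ≤ pol s a) (hP1 : ∀ s a, (∑ s', P s a s') = 1)
    (hpol1 : ∀ s, (∑ a, pol s a) = 1) (hμ0 : ∀ s, 0 ≤ μ s) (hμ1 : (∑ s, μ s) = 1) (s' : S) :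
    dFut γ P μ pol s' = (1 - γ) * μ s' + γ * ∑ s, Pmat P pol s' s * dFut γ P μ pol s := by
  have hsummable := summable_aux hγ0 hγ1 hP0 hpol0 hP1 hpol1 hμ0 hμ1 (μ := μ)
  have h1 : ∀ s ∈ Finset.univ (α := S), Pmat P pol s' s * dFut γ P μ pol s
      = ∑' t : ℕ, (Pmat P pol s' s * (1 - γ)) * (γ ^ t * ((Pmat P pol ^ t) *ᵥ μ) s) := by
    intro s _
    rw [tsum_mul_left]
    unfold dFut
    ring
  have h2 : ∀ t : ℕ, (∑ s, (Pmat P pol s' s * (1 - γ)) * (γ ^ t * ((Pmat P pol ^ t) *ᵥ μ) s))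
      = γ ^ t * ((1 - γ) * ((Pmat P pol ^ (t + 1)) *ᵥ μ) s') := by
    intro t
    rw [iter_succ, Finset.mul_sum, Finset.mul_sum]
    exact Finset.sum_congr rfl fun s _ => by ring
  have hRHS : ∑ s, Pmat P pol s' s * dFut γ P μ pol s
      = (1 - γ) * ∑' t : ℕ, γ ^ t * ((Pmat P pol ^ (t + 1)) *ᵥ μ) s' := by
    rw [Finset.sum_congr rfl h1,
      ← Summable.tsum_finsetSum (fun s _ => ((hsummable s).mul_left _)), tsum_congr h2]
    rw [show (fun t : ℕ => γ ^ t * ((1 - γ) * ((Pmat P pol ^ (t + 1)) *ᵥ μ) s'))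
        = (fun t : ℕ => (1 - γ) * (γ ^ t * ((Pmat P pol ^ (t + 1)) *ᵥ μ) s')) from
        funext fun t => by ring]
    rw [tsum_mul_left]
  have hshift := Summable.tsum_eq_zero_add (hsummable s')
  have hzero : γ ^ 0 * ((Pmat P pol ^ 0) *ᵥ μ) s' = μ s' := by
    simp [Matrix.one_mulVec]
  have htail : ∑' t : ℕ, γ ^ (t + 1) * ((Pmat P pol ^ (t + 1)) *ᵥ μ) s'
      = γ * ∑' t : ℕ, γ ^ t * ((Pmat P pol ^ (t + 1)) *ᵥ μ) s' := by
    rw [show (fun t : ℕ => γ ^ (t + 1) * ((Pmat P pol ^ (t + 1)) *ᵥ μ) s')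
        = (fun t : ℕ => γ * (γ ^ t * ((Pmat P pol ^ (t + 1)) *ᵥ μ) s')) from
        funext fun t => by ring]
    rw [tsum_mul_left]
  rw [hRHS]
  unfold dFut
  rw [hshift, hzero, htail]
  ring

/-- Expected advantage at a state, rewritten via the policy matrix. -/
lemma sum_pol_Adv (R : S → A → S → ℝ) (V : S → ℝ)
    (hpol1 : ∀ s, (∑ a, pol s a) = 1) (s : S) :
    ∑ a, pol s a * Adv γ P R V s a
      = (∑ a, pol s a * (∑ s', P s a s' * R s a s'))
        + γ * (∑ s', Pmat P pol s' s * V s') - V s := by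
  have hV1 : ∑ a, pol s a * V s = V s := by rw [← Finset.sum_mul, hpol1, one_mul]
  have step1 : ∀ a ∈ Finset.univ (α := A), pol s a * Adv γ P R V s a
      = (∑ s', pol s a * (P s a s' * R s a s'))
        + (∑ s', γ * ((P s a s' * pol s a) * V s')) - pol s a * V s := by
    intro a _
    unfold Adv
    rw [mul_sub, Finset.mul_sum, ← Finset.sum_add_distrib]
    congr 1
    exact Finset.sum_congr rfl fun s' _ => by ring
  rw [Finset.sum_congr rfl step1, Finset.sum_sub_distrib, Finset.sum_add_distrib, hV1]
  have e1 : ∑ a, ∑ s', pol s a * (P s a s' * R s a s')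
      = ∑ a, pol s a * (∑ s', P s a s' * R s a s') :=
    Finset.sum_congr rfl fun a _ => (Finset.mul_sum _ _ _).symm
  have e2 : ∑ a, ∑ s', γ * ((P s a s' * pol s a) * V s')
      = γ * ∑ s', Pmat P pol s' s * V s' := by
    rw [Finset.sum_comm, Finset.mul_sum]
    apply Finset.sum_congr rfl
    intro s' _
    unfold Pmat
    rw [Finset.sum_mul, Finset.mul_sum]
  rw [e1, e2]

/-- Performance-difference identity. -/
lemma perf_identity (R : S → A → S → ℝ) (V : S → ℝ)
    (hγ0 : 0 ≤ γ) (hγ1 : γ < 1) (hP0 : ∀ s a s', 0 ≤ P s a s')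
    (hP1 : ∀ s a, (∑ s', P s a s') = 1)
    (hμ0 : ∀ s, 0 ≤ μ s) (hμ1 : (∑ s, μ s) = 1)
    (hpol0 : ∀ s a, 0 ≤ pol s a) (hpol1 : ∀ s, (∑ a, pol s a) = 1) :
    ∑ s, dFut γ P μ pol s * (∑ a, pol s a * Adv γ P R V s a)
      = (1 - γ) * Jret γ P R μ pol - (1 - γ) * ∑ s, μ s * V s := by
  set d : S → ℝ := dFut γ P μ pol with hd
  have hmid : ∀ s : S, d s * (∑ s', Pmat P pol s' s * V s')
      = ∑ s', (Pmat P pol s' s * d s) * V s' := by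
    intro s
    rw [Finset.mul_sum]
    exact Finset.sum_congr rfl fun s' _ => by ring
  have hA : ∀ s ∈ Finset.univ (α := S), d s * (∑ a, pol s a * Adv γ P R V s a)
      = d s * (∑ a, pol s a * (∑ s', P s a s' * R s a s'))
        + γ * (∑ s', (Pmat P pol s' s * d s) * V s') - d s * V s := by
    intro s _
    rw [sum_pol_Adv R V hpol1 s, ← hmid s]
    ring
  rw [Finset.sum_congr rfl hA, Finset.sum_sub_distrib, Finset.sum_add_distrib, ← Finset.mul_sum]
  have hswap : ∑ s, ∑ s', (Pmat P pol s' s * d s) * V s'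
      = ∑ s', (∑ s, Pmat P pol s' s * d s) * V s' := by
    rw [Finset.sum_comm]
    exact Finset.sum_congr rfl fun s' _ => (Finset.sum_mul _ _ _).symm
  rw [hswap]
  have hkey : γ * ∑ s', (∑ s, Pmat P pol s' s * d s) * V s'
      = (∑ s', d s' * V s') - (1 - γ) * ∑ s', μ s' * V s' := by
    rw [Finset.mul_sum,
      show (1 - γ) * ∑ s', μ s' * V s' = ∑ s', (1 - γ) * (μ s' * V s') from
        Finset.mul_sum _ _ _,
      ← Finset.sum_sub_distrib]
    apply Finset.sum_congr rfl
    intro s' _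
    have hr := dFut_rec hγ0 hγ1 hP0 hpol0 hP1 hpol1 hμ0 hμ1 s'
    rw [← hd] at hr
    linear_combination (-V s') * hr
  rw [hkey]
  have hJ : (1 - γ) * Jret γ P R μ pol
      = ∑ s, d s * (∑ a, pol s a * (∑ s', P s a s' * R s a s')) := by
    unfold Jret
    rw [← mul_assoc, mul_one_div, div_self (by linarith : (1:ℝ) - γ ≠ 0), one_mul]
  rw [hJ]
  ring

/-- L1 bound on the difference of discounted state distributions. -/
lemma l1_bound (hγ0 : 0 ≤ γ) (hγ1 : γ < 1) (hP0 : ∀ s a s', 0 ≤ P s a s')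
    (hP1 : ∀ s a, (∑ s', P s a s') = 1)
    (hμ0 : ∀ s, 0 ≤ μ s) (hμ1 : (∑ s, μ s) = 1)
    (pk pk1 : S → A → ℝ)
    (hpk0 : ∀ s a, 0 ≤ pk s a) (hpk1 : ∀ s, (∑ a, pk s a) = 1)
    (hpk10 : ∀ s a, 0 ≤ pk1 s a) (hpk11 : ∀ s, (∑ a, pk1 s a) = 1) :
    (1 - γ) * ∑ s', |dFut γ P μ pk1 s' - dFut γ P μ pk s'|
      ≤ γ * ∑ s, dFut γ P μ pk s * (∑ a, |pk1 s a - pk s a|) := by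
  set d : S → ℝ := dFut γ P μ pk with hd
  set d' : S → ℝ := dFut γ P μ pk1 with hd'
  set M : Matrix S S ℝ := Pmat P pk with hM
  set M' : Matrix S S ℝ := Pmat P pk1 with hM'
  have hrec : ∀ s' : S, d' s' - d s'
      = γ * (∑ s, M' s' s * (d' s - d s)) + γ * (∑ s, (M' s' s - M s' s) * d s) := by
    intro s'
    have h1 := dFut_rec hγ0 hγ1 hP0 hpk10 hP1 hpk11 hμ0 hμ1 s'
    have h2 := dFut_rec hγ0 hγ1 hP0 hpk0 hP1 hpk1 hμ0 hμ1 s'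
    rw [← hd'] at h1
    rw [← hd] at h2
    have e1 : ∑ s, M' s' s * (d' s - d s)
        = (∑ s, M' s' s * d' s) - ∑ s, M' s' s * d s := by
      rw [← Finset.sum_sub_distrib]
      exact Finset.sum_congr rfl fun s _ => by ring
    have e2 : ∑ s, (M' s' s - M s' s) * d s
        = (∑ s, M' s' s * d s) - ∑ s, M s' s * d s := by
      rw [← Finset.sum_sub_distrib]
      exact Finset.sum_congr rfl fun s _ => by ring
    rw [e1, e2]
    linarith
  have habs : ∀ s' ∈ Finset.univ (α := S), |d' s' - d s'|
      ≤ γ * (∑ s, M' s' s * |d' s - d s|)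
        + γ * (∑ s, (∑ a, P s a s' * |pk1 s a - pk s a|) * d s) := by
    intro s' _
    rw [hrec s']
    refine le_trans (abs_add_le _ _) ?_
    have hA : |γ * (∑ s, M' s' s * (d' s - d s))| ≤ γ * (∑ s, M' s' s * |d' s - d s|) := by
      rw [abs_mul, abs_of_nonneg hγ0]
      apply mul_le_mul_of_nonneg_left _ hγ0
      refine le_trans (Finset.abs_sum_le_sum_abs _ _) (Finset.sum_le_sum fun s _ => ?_)
      rw [abs_mul, abs_of_nonneg (Pmat_nonneg hP0 hpk10 s' s)]
    have hB : |γ * (∑ s, (M' s' s - M s' s) * d s)|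
        ≤ γ * (∑ s, (∑ a, P s a s' * |pk1 s a - pk s a|) * d s) := by
      rw [abs_mul, abs_of_nonneg hγ0]
      apply mul_le_mul_of_nonneg_left _ hγ0
      refine le_trans (Finset.abs_sum_le_sum_abs _ _) (Finset.sum_le_sum fun s _ => ?_)
      rw [abs_mul, abs_of_nonneg (dFut_nonneg hγ0 hγ1 hP0 hpk0 hμ0 s)]
      apply mul_le_mul_of_nonneg_right _ (dFut_nonneg hγ0 hγ1 hP0 hpk0 hμ0 s)
      have hdiff : M' s' s - M s' s = ∑ a, P s a s' * (pk1 s a - pk s a) := by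
        rw [hM', hM]
        unfold Pmat
        rw [← Finset.sum_sub_distrib]
        exact Finset.sum_congr rfl fun a _ => by ring
      rw [hdiff]
      refine le_trans (Finset.abs_sum_le_sum_abs _ _) (Finset.sum_le_sum fun a _ => ?_)
      rw [abs_mul, abs_of_nonneg (hP0 s a s')]
    exact add_le_add hA hB
  have hsum := Finset.sum_le_sum habs
  rw [Finset.sum_add_distrib, ← Finset.mul_sum, ← Finset.mul_sum] at hsum
  have hc1 : ∑ s', ∑ s, M' s' s * |d' s - d s| = ∑ s, |d' s - d s| := by
    rw [Finset.sum_comm]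
    apply Finset.sum_congr rfl
    intro s _
    rw [← Finset.sum_mul, hM', Pmat_col hP1 hpk11, one_mul]
  have hc2 : ∑ s', ∑ s, (∑ a, P s a s' * |pk1 s a - pk s a|) * d s
      = ∑ s, d s * (∑ a, |pk1 s a - pk s a|) := by
    rw [Finset.sum_comm]
    apply Finset.sum_congr rfl
    intro s _
    rw [← Finset.sum_mul]
    have : ∑ s', ∑ a, P s a s' * |pk1 s a - pk s a| = ∑ a, |pk1 s a - pk s a| := by
      rw [Finset.sum_comm]
      apply Finset.sum_congr rfl
      intro a _
      rw [← Finset.sum_mul, hP1, one_mul]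
    rw [this]
    ring
  rw [hc1, hc2] at hsum
  linarith

end MDPAux

/-- **Proposition 1 (trust region update performance).** If
`E_{s∼d^{π_k}, a∼π_{k+1}}[A^{π_k}(s,a)] ≥ 0` and the average KL divergence is at most `δ`, then
`J(π_{k+1}) - J(π_k) ≥ -√(2δ) γ ε^{π_{k+1}} / (1-γ)²`. -/
theorem trust_region_update_performance
    [Fintype S] [DecidableEq S] [Nonempty S] [Fintype A] [Nonempty A]
    (γ : ℝ) (hγ0 : 0 ≤ γ) (hγ1 : γ < 1)
    (P : S → A → S → ℝ) (hP0 : ∀ s a s', 0 ≤ P s a s')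
    (hP1 : ∀ s a, (∑ s', P s a s') = 1)
    (μ : S → ℝ) (hμ0 : ∀ s, 0 ≤ μ s) (hμ1 : (∑ s, μ s) = 1)
    (R : S → A → S → ℝ)
    (pk pk1 : S → A → ℝ)
    (hpk0 : ∀ s a, 0 < pk s a) (hpk1 : ∀ s, (∑ a, pk s a) = 1)
    (hpk10 : ∀ s a, 0 ≤ pk1 s a) (hpk11 : ∀ s, (∑ a, pk1 s a) = 1)
    (V : S → ℝ)
    (hV : ∀ s, V s = ∑ a, pk s a * (∑ s', P s a s' * (R s a s' + γ * V s')))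
    (δ : ℝ) (hδ : 0 < δ)
    (hsurr : 0 ≤ ∑ s, dFut γ P μ pk s * (∑ a, pk1 s a * Adv γ P R V s a))
    (hkl : (∑ s, dFut γ P μ pk s * DKL pk1 pk s) ≤ δ) :
    Jret γ P R μ pk1 - Jret γ P R μ pk
      ≥ -(Real.sqrt (2 * δ) * γ * (⨆ t, |∑ a, pk1 t a * Adv γ P R V t a|))
          / (1 - γ) ^ 2 := by
  have h1γ : (0:ℝ) < 1 - γ := by linarith
  -- abbreviations (plain definitions, no `set`, to keep syntactic forms)
  have hpk0' : ∀ s a, 0 ≤ pk s a := fun s a => (hpk0 s a).le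
  -- the two performance identities
  have key1 := perf_identity (γ := γ) (P := P) (μ := μ) (pol := pk1) R V
    hγ0 hγ1 hP0 hP1 hμ0 hμ1 hpk10 hpk11
  have key2 := perf_identity (γ := γ) (P := P) (μ := μ) (pol := pk) R V
    hγ0 hγ1 hP0 hP1 hμ0 hμ1 hpk0' hpk1
  have hzero : ∀ s : S, (∑ a, pk s a * Adv γ P R V s a) = 0 := by
    intro s
    have hexp : ∑ a, pk s a * Adv γ P R V s a
        = (∑ a, pk s a * (∑ s', P s a s' * (R s a s' + γ * V s')))
          - (∑ a, pk s a) * V s := by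
      rw [Finset.sum_mul, ← Finset.sum_sub_distrib]
      apply Finset.sum_congr rfl
      intro a _
      unfold Adv
      ring
    rw [hexp, hpk1, one_mul, ← hV s, sub_self]
  have hzero' : ∑ s, dFut γ P μ pk s * (∑ a, pk s a * Adv γ P R V s a) = 0 := by
    rw [show (0:ℝ) = ∑ s : S, (0:ℝ) from by simp]
    exact Finset.sum_congr rfl fun s _ => by rw [hzero s, mul_zero]
  rw [hzero'] at key2
  -- the sup of advantage magnitudes
  have hbdd : BddAbove (Set.range fun t : S => |∑ a, pk1 t a * Adv γ P R V t a|) :=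
    Set.Finite.bddAbove (Set.finite_range _)
  have hεle : ∀ t : S, |∑ a, pk1 t a * Adv γ P R V t a|
      ≤ ⨆ t, |∑ a, pk1 t a * Adv γ P R V t a| := fun t => le_ciSup hbdd t
  have hε0 : 0 ≤ ⨆ t, |∑ a, pk1 t a * Adv γ P R V t a| :=
    le_trans (abs_nonneg _) (hεle (Classical.arbitrary S))
  -- lower bound for the distribution-shifted expectation
  have hterm : ∀ s ∈ Finset.univ (α := S),
      -(|dFut γ P μ pk1 s - dFut γ P μ pk s| * (⨆ t, |∑ a, pk1 t a * Adv γ P R V t a|))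
        ≤ (dFut γ P μ pk1 s - dFut γ P μ pk s) * (∑ a, pk1 s a * Adv γ P R V s a) := by
    intro s _
    have h1 : |(dFut γ P μ pk1 s - dFut γ P μ pk s) * (∑ a, pk1 s a * Adv γ P R V s a)|
        ≤ |dFut γ P μ pk1 s - dFut γ P μ pk s| * (⨆ t, |∑ a, pk1 t a * Adv γ P R V t a|) := by
      rw [abs_mul]
      exact mul_le_mul_of_nonneg_left (hεle s) (abs_nonneg _)
    have h2 := neg_abs_le ((dFut γ P μ pk1 s - dFut γ P μ pk s)
      * (∑ a, pk1 s a * Adv γ P R V s a))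
    linarith
  have hlow := Finset.sum_le_sum hterm
  have hlhs : ∑ s, -(|dFut γ P μ pk1 s - dFut γ P μ pk s|
        * (⨆ t, |∑ a, pk1 t a * Adv γ P R V t a|))
      = -((∑ s, |dFut γ P μ pk1 s - dFut γ P μ pk s|)
        * (⨆ t, |∑ a, pk1 t a * Adv γ P R V t a|)) := by
    rw [Finset.sum_neg_distrib, Finset.sum_mul]
  rw [hlhs] at hlow
  have hsplit : ∑ s, (dFut γ P μ pk1 s - dFut γ P μ pk s) * (∑ a, pk1 s a * Adv γ P R V s a)
      = (∑ s, dFut γ P μ pk1 s * (∑ a, pk1 s a * Adv γ P R V s a))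
        - ∑ s, dFut γ P μ pk s * (∑ a, pk1 s a * Adv γ P R V s a) := by
    rw [← Finset.sum_sub_distrib]
    exact Finset.sum_congr rfl fun s _ => by ring
  rw [hsplit] at hlow
  -- Pinsker chain: K ≤ sqrt (2δ)
  have hdnn : ∀ s : S, 0 ≤ dFut γ P μ pk s := fun s =>
    dFut_nonneg hγ0 hγ1 hP0 hpk0' hμ0 s
  have hK : ∑ s, dFut γ P μ pk s * (∑ a, |pk1 s a - pk s a|) ≤ Real.sqrt (2 * δ) := by
    have hph : ∀ s : S, (∑ a, |pk1 s a - pk s a|) ^ 2 ≤ 2 * DKL pk1 pk s := by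
      intro s
      exact pinsker_sum (fun a => pk1 s a) (fun a => pk s a)
        (fun a => hpk10 s a) (fun a => hpk0 s a) (hpk11 s) (hpk1 s)
    have cs := Finset.sum_sq_le_sum_mul_sum_of_sq_eq_mul Finset.univ
      (r := fun s => dFut γ P μ pk s * (∑ a, |pk1 s a - pk s a|))
      (f := fun s => dFut γ P μ pk s)
      (g := fun s => dFut γ P μ pk s * (∑ a, |pk1 s a - pk s a|) ^ 2)
      (fun s _ => hdnn s)
      (fun s _ => mul_nonneg (hdnn s) (sq_nonneg _))
      (fun s _ => by ring)
    rw [dFut_sum hγ0 hγ1 hP0 hpk0' hP1 hpk1 hμ0 hμ1, one_mul] at cs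
    have h2 : ∑ s, dFut γ P μ pk s * (∑ a, |pk1 s a - pk s a|) ^ 2
        ≤ ∑ s, dFut γ P μ pk s * (2 * DKL pk1 pk s) :=
      Finset.sum_le_sum fun s _ => mul_le_mul_of_nonneg_left (hph s) (hdnn s)
    have h3 : ∑ s, dFut γ P μ pk s * (2 * DKL pk1 pk s)
        = 2 * ∑ s, dFut γ P μ pk s * DKL pk1 pk s := by
      rw [Finset.mul_sum]
      exact Finset.sum_congr rfl fun s _ => by ring
    have hKsq : (∑ s, dFut γ P μ pk s * (∑ a, |pk1 s a - pk s a|)) ^ 2 ≤ 2 * δ := by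
      rw [h3] at h2
      linarith
    have hK0 : 0 ≤ ∑ s, dFut γ P μ pk s * (∑ a, |pk1 s a - pk s a|) :=
      Finset.sum_nonneg fun s _ => mul_nonneg (hdnn s)
        (Finset.sum_nonneg fun a _ => abs_nonneg _)
    calc ∑ s, dFut γ P μ pk s * (∑ a, |pk1 s a - pk s a|)
        = Real.sqrt ((∑ s, dFut γ P μ pk s * (∑ a, |pk1 s a - pk s a|)) ^ 2) :=
          (Real.sqrt_sq hK0).symm
      _ ≤ Real.sqrt (2 * δ) := Real.sqrt_le_sqrt hKsq
  -- L1 bound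
  have hl1 := l1_bound hγ0 hγ1 hP0 hP1 hμ0 hμ1 pk pk1 hpk0' hpk1 hpk10 hpk11
  have hE0 : 0 ≤ ∑ s', |dFut γ P μ pk1 s' - dFut γ P μ pk s'| :=
    Finset.sum_nonneg fun s _ => abs_nonneg _
  -- final assembly
  rw [ge_iff_le, div_le_iff₀ (by positivity : (0:ℝ) < (1 - γ) ^ 2)]
  have hXsq : (Jret γ P R μ pk1 - Jret γ P R μ pk) * (1 - γ) ^ 2
      = (1 - γ) * ((1 - γ) * Jret γ P R μ pk1 - (1 - γ) * Jret γ P R μ pk) := by ring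
  have a1 : (1 - γ) * (∑ s, dFut γ P μ pk1 s * (∑ a, pk1 s a * Adv γ P R V s a))
      ≥ (1 - γ) * (-((∑ s, |dFut γ P μ pk1 s - dFut γ P μ pk s|)
          * (⨆ t, |∑ a, pk1 t a * Adv γ P R V t a|))) := by
    apply mul_le_mul_of_nonneg_left _ h1γ.le
    linarith
  have a2 : ((1 - γ) * ∑ s', |dFut γ P μ pk1 s' - dFut γ P μ pk s'|)
        * (⨆ t, |∑ a, pk1 t a * Adv γ P R V t a|)
      ≤ (γ * ∑ s, dFut γ P μ pk s * (∑ a, |pk1 s a - pk s a|))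
        * (⨆ t, |∑ a, pk1 t a * Adv γ P R V t a|) :=
    mul_le_mul_of_nonneg_right hl1 hε0
  have a3 : (γ * ∑ s, dFut γ P μ pk s * (∑ a, |pk1 s a - pk s a|))
        * (⨆ t, |∑ a, pk1 t a * Adv γ P R V t a|)
      ≤ (γ * Real.sqrt (2 * δ)) * (⨆ t, |∑ a, pk1 t a * Adv γ P R V t a|) :=
    mul_le_mul_of_nonneg_right (mul_le_mul_of_nonneg_left hK hγ0) hε0
  nlinarith [key1, key2, hXsq, a1, a2, a3]
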